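/- Theorem 3.2 (quadratic convergence of Picard–Newton under the uniqueness condition): suppose α := Mν⁻²‖f‖ < 1, let u ∈ V be a weak NSE solution, and let (uₖ), (ûₖ) be Picard–Newton iterates from an initial iterate u₀ ∈ V (for every k ≥ 0, û_{k+1} is a Picard update of uₖ and u_{k+1} is a Newton update of û_{k+1}). If the initial iterate satisfies Mν⁻¹α²(1−α)⁻¹‖u − u₀‖ < 1, then for every k ≥ 0, ‖u − u_{k+1}‖ ≤ Mν⁻¹α²(1−α)⁻¹‖u − uₖ‖², and ‖u − uₖ‖ → 0 as k → ∞; in particular the iteration converges quadratically to u. -/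

import Mathlib

open scoped RealInnerProductSpace

private lemma div_aux {ν K n : ℝ} (hν : 0 < ν) (hn : 0 ≤ n) (hK : 0 ≤ K)
    (h : ν * n ^ 2 ≤ K * n) : n ≤ ν⁻¹ * K := by
  rcases hn.eq_or_lt with h0 | h0
  · rw [← h0]; positivity
  · have h2 : ν * n ≤ K := by nlinarith
    nlinarith [inv_pos.mpr hν, mul_inv_cancel₀ hν.ne']

/-- Theorem 3.2 (quadratic convergence of Picard–Newton under the uniqueness
condition): if `α := Mν⁻²‖f‖ < 1`, `u` is a weak NSE solution, the iterates
`(u k)`, `(uhat k)` follow the Picard–Newton iteration, and the initial iterate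
satisfies `Mν⁻¹α²(1−α)⁻¹‖u − u 0‖ < 1`, then for every `k`,
`‖u − u (k+1)‖ ≤ Mν⁻¹α²(1−α)⁻¹‖u − u k‖²` and `‖u − u k‖ → 0`. -/
theorem picard_newton_quadratic_convergence
    {V : Type*} [NormedAddCommGroup V] [InnerProductSpace ℝ V]
    (b : V →ₗ[ℝ] V →ₗ[ℝ] V →ₗ[ℝ] ℝ)
    (hskew : ∀ z w : V, b z w w = 0)
    (M : ℝ) (hM : 0 < M)
    (hbound : ∀ z w v : V, |b z w v| ≤ M * ‖z‖ * ‖w‖ * ‖v‖)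
    (f : V →L[ℝ] ℝ) (ν : ℝ) (hν : 0 < ν)
    (α : ℝ) (hα : α = M * ν⁻¹ ^ 2 * ‖f‖) (hα1 : α < 1)
    (u₀ : V) (u uhat : ℕ → V) (hu0 : u 0 = u₀)
    (usol : V)
    (hNSE : ∀ v : V, ν * ⟪usol, v⟫ + b usol usol v = f v)
    (hPicard : ∀ k : ℕ, ∀ v : V,
      ν * ⟪uhat (k + 1), v⟫ + b (u k) (uhat (k + 1)) v = f v)
    (hNewton : ∀ k : ℕ, ∀ v : V,
      ν * ⟪u (k + 1), v⟫ + b (uhat (k + 1)) (u (k + 1)) v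
        + b (u (k + 1)) (uhat (k + 1)) v - b (uhat (k + 1)) (uhat (k + 1)) v = f v)
    (hinit : M * ν⁻¹ * α ^ 2 * (1 - α)⁻¹ * ‖usol - u₀‖ < 1) :
    (∀ k : ℕ,
      ‖usol - u (k + 1)‖ ≤ M * ν⁻¹ * α ^ 2 * (1 - α)⁻¹ * ‖usol - u k‖ ^ 2)
    ∧ Filter.Tendsto (fun k : ℕ => ‖usol - u k‖) Filter.atTop (nhds 0) := by
  have hα0 : 0 ≤ α := by rw [hα]; positivity
  have h1α : 0 < 1 - α := by linarith
  have hfle : ∀ x : V, (f x : ℝ) ≤ ‖f‖ * ‖x‖ := fun x =>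
    (le_abs_self _).trans (by rw [← Real.norm_eq_abs]; exact f.le_opNorm x)
  -- a priori bound on the solution
  have husol : ‖usol‖ ≤ ν⁻¹ * ‖f‖ := by
    have h1 := hNSE usol
    rw [hskew usol usol, real_inner_self_eq_norm_sq] at h1
    exact div_aux hν (norm_nonneg _) (norm_nonneg _) (by linarith [hfle usol])
  -- a priori bound on the Picard iterates
  have huhat : ∀ k : ℕ, ‖uhat (k + 1)‖ ≤ ν⁻¹ * ‖f‖ := by
    intro k
    have h1 := hPicard k (uhat (k + 1))
    rw [hskew (u k) (uhat (k + 1)), real_inner_self_eq_norm_sq] at h1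
    exact div_aux hν (norm_nonneg _) (norm_nonneg _) (by linarith [hfle (uhat (k + 1))])
  -- Picard error estimate
  have hPic : ∀ k : ℕ, ‖usol - uhat (k + 1)‖ ≤ α * ‖usol - u k‖ := by
    intro k
    have h1 := hNSE (usol - uhat (k + 1))
    have h2 := hPicard k (usol - uhat (k + 1))
    have hz := hskew (u k) (usol - uhat (k + 1))
    have key : ν * ⟪usol - uhat (k + 1), usol - uhat (k + 1)⟫
        = - b (usol - u k) usol (usol - uhat (k + 1)) := by
      rw [inner_sub_left, mul_sub]
      simp only [map_sub, LinearMap.sub_apply] at h1 h2 hz ⊢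
      linarith
    rw [real_inner_self_eq_norm_sq] at key
    have key2 : ν * ‖usol - uhat (k + 1)‖ ^ 2
        ≤ M * ‖usol - u k‖ * ‖usol‖ * ‖usol - uhat (k + 1)‖ := by
      rw [key]
      exact (neg_le_abs _).trans (hbound _ _ _)
    have h3 := div_aux hν (norm_nonneg _) (by positivity) key2
    calc ‖usol - uhat (k + 1)‖ ≤ ν⁻¹ * (M * ‖usol - u k‖ * ‖usol‖) := h3
      _ ≤ ν⁻¹ * (M * ‖usol - u k‖ * (ν⁻¹ * ‖f‖)) := by gcongr
      _ = α * ‖usol - u k‖ := by rw [hα]; ring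
  -- Newton error estimate
  have hNewtErr : ∀ k : ℕ, ‖usol - u (k + 1)‖
      ≤ M * ν⁻¹ * (1 - α)⁻¹ * ‖usol - uhat (k + 1)‖ ^ 2 := by
    intro k
    have h1 := hNSE (usol - u (k + 1))
    have h2 := hNewton k (usol - u (k + 1))
    have hz := hskew (uhat (k + 1)) (usol - u (k + 1))
    have key : ν * ⟪usol - u (k + 1), usol - u (k + 1)⟫
        = - b (usol - uhat (k + 1)) (usol - uhat (k + 1)) (usol - u (k + 1))
          - b (usol - u (k + 1)) (uhat (k + 1)) (usol - u (k + 1)) := by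
      rw [inner_sub_left, mul_sub]
      simp only [map_sub, LinearMap.sub_apply] at h1 h2 hz ⊢
      linarith
    rw [real_inner_self_eq_norm_sq] at key
    have b1 : - b (usol - uhat (k + 1)) (usol - uhat (k + 1)) (usol - u (k + 1))
        ≤ M * ‖usol - uhat (k + 1)‖ * ‖usol - uhat (k + 1)‖ * ‖usol - u (k + 1)‖ :=
      (neg_le_abs _).trans (hbound _ _ _)
    have b2 : - b (usol - u (k + 1)) (uhat (k + 1)) (usol - u (k + 1))
        ≤ M * ‖usol - u (k + 1)‖ * ‖uhat (k + 1)‖ * ‖usol - u (k + 1)‖ :=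
      (neg_le_abs _).trans (hbound _ _ _)
    have h3 : ν * ‖usol - u (k + 1)‖ ^ 2
        ≤ M * ‖usol - uhat (k + 1)‖ * ‖usol - uhat (k + 1)‖ * ‖usol - u (k + 1)‖
          + M * ‖usol - u (k + 1)‖ * ‖uhat (k + 1)‖ * ‖usol - u (k + 1)‖ := by
      linarith
    have h4 : M * ‖usol - u (k + 1)‖ * ‖uhat (k + 1)‖ * ‖usol - u (k + 1)‖
        ≤ M * ‖usol - u (k + 1)‖ * (ν⁻¹ * ‖f‖) * ‖usol - u (k + 1)‖ := by
      gcongr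
      exact huhat k
    have h5 : M * ‖usol - u (k + 1)‖ * (ν⁻¹ * ‖f‖) * ‖usol - u (k + 1)‖
        = ν * α * ‖usol - u (k + 1)‖ ^ 2 := by
      rw [hα]; field_simp
    have h6 : ν * (1 - α) * ‖usol - u (k + 1)‖ ^ 2
        ≤ (M * ‖usol - uhat (k + 1)‖ * ‖usol - uhat (k + 1)‖) * ‖usol - u (k + 1)‖ := by
      have e : ν * (1 - α) * ‖usol - u (k + 1)‖ ^ 2
          = ν * ‖usol - u (k + 1)‖ ^ 2 - ν * α * ‖usol - u (k + 1)‖ ^ 2 := by ring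
      rw [e]
      linarith
    have h7 := div_aux (mul_pos hν h1α) (norm_nonneg _) (by positivity) h6
    calc ‖usol - u (k + 1)‖
        ≤ (ν * (1 - α))⁻¹ * (M * ‖usol - uhat (k + 1)‖ * ‖usol - uhat (k + 1)‖) := h7
      _ = M * ν⁻¹ * (1 - α)⁻¹ * ‖usol - uhat (k + 1)‖ ^ 2 := by rw [mul_inv]; ring
  -- the quadratic recursion
  have hrec : ∀ k : ℕ, ‖usol - u (k + 1)‖
      ≤ M * ν⁻¹ * α ^ 2 * (1 - α)⁻¹ * ‖usol - u k‖ ^ 2 := by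
    intro k
    have h1 := hNewtErr k
    have h2 : ‖usol - uhat (k + 1)‖ ^ 2 ≤ (α * ‖usol - u k‖) ^ 2 :=
      pow_le_pow_left₀ (norm_nonneg _) (hPic k) 2
    have hc : (0:ℝ) ≤ M * ν⁻¹ * (1 - α)⁻¹ :=
      mul_nonneg (mul_nonneg hM.le (inv_nonneg.2 hν.le)) (inv_nonneg.2 h1α.le)
    calc ‖usol - u (k + 1)‖ ≤ M * ν⁻¹ * (1 - α)⁻¹ * ‖usol - uhat (k + 1)‖ ^ 2 := h1
      _ ≤ M * ν⁻¹ * (1 - α)⁻¹ * (α * ‖usol - u k‖) ^ 2 :=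
          mul_le_mul_of_nonneg_left h2 hc
      _ = M * ν⁻¹ * α ^ 2 * (1 - α)⁻¹ * ‖usol - u k‖ ^ 2 := by ring
  refine ⟨hrec, ?_⟩
  -- convergence
  set C : ℝ := M * ν⁻¹ * α ^ 2 * (1 - α)⁻¹ with hC
  have hC0 : 0 ≤ C := by
    rw [hC]
    exact mul_nonneg (mul_nonneg (mul_nonneg hM.le (inv_nonneg.2 hν.le)) (sq_nonneg α))
      (inv_nonneg.2 h1α.le)
  set r : ℝ := C * ‖usol - u₀‖ with hr
  have hr0 : 0 ≤ r := mul_nonneg hC0 (norm_nonneg _)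
  have hr1 : r < 1 := hinit
  have claim1 : ∀ k : ℕ, C * ‖usol - u k‖ ≤ r := by
    intro k
    induction k with
    | zero => rw [hu0]
    | succ k ih =>
      have h1 := hrec k
      nlinarith [mul_le_mul ih ih (mul_nonneg hC0 (norm_nonneg _)) hr0,
        mul_le_mul_of_nonneg_left h1 hC0, norm_nonneg (usol - u k)]
  have claim2 : ∀ k : ℕ, ‖usol - u k‖ ≤ r ^ k * ‖usol - u 0‖ := by
    intro k
    induction k with
    | zero => simp
    | succ k ih =>
      rw [pow_succ]
      have h1 := hrec k
      nlinarith [mul_le_mul (claim1 k) ih (norm_nonneg (usol - u k))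
        hr0, norm_nonneg (usol - u k), pow_nonneg hr0 k]
  have hgeo : Filter.Tendsto (fun k : ℕ => r ^ k * ‖usol - u 0‖)
      Filter.atTop (nhds 0) := by
    have := (tendsto_pow_atTop_nhds_zero_of_lt_one hr0 hr1).mul_const ‖usol - u 0‖
    rwa [zero_mul] at this
  exact squeeze_zero (fun k => norm_nonneg _) claim2 hgeo
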